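/- Let m ≥ 1 and k ∈ ℕ, let P : ℝ^m → ℝ_{0,m} be a left monogenic function that is homogeneous of degree k (P(tx) = t^k P(x) for all t ∈ ℝ, x ∈ ℝ^m), and let B : (0,∞) → ℝ be continuously differentiable. Then for all x ∈ ℝ^m with x ≠ 0, writing r = |x|, one has ∂_x(B(r) ι(x) P(x)) = −((2k + m)B(r) + r B′(r)) P(x). -/

import Mathlib

noncomputable section

open scoped BigOperators

/-- The `ℓ¹`-norm with respect to a Hamel basis.  On a finite-dimensional real
vector space (such as the Clifford algebra `ℝ_{0,m}`) the induced topology is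
the canonical one. -/
def hamelNorm (V : Type) [AddCommGroup V] [Module ℝ V] : AddGroupNorm V where
  toFun v := ∑ i ∈ ((Module.Basis.ofVectorSpace ℝ V).repr v).support,
      |(Module.Basis.ofVectorSpace ℝ V).repr v i|
  map_zero' := by simp
  add_le' := by
    intro x y
    classical
    set b := Module.Basis.ofVectorSpace ℝ V
    have hrepr : b.repr (x + y) = b.repr x + b.repr y := map_add _ _ _
    calc ∑ i ∈ (b.repr (x + y)).support, |b.repr (x + y) i|
        ≤ ∑ i ∈ (b.repr x).support ∪ (b.repr y).support, |b.repr (x + y) i| := by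
          refine Finset.sum_le_sum_of_subset_of_nonneg ?_ (fun i _ _ => abs_nonneg _)
          rw [hrepr]; exact Finsupp.support_add
      _ ≤ ∑ i ∈ (b.repr x).support ∪ (b.repr y).support, (|b.repr x i| + |b.repr y i|) := by
          refine Finset.sum_le_sum fun i _ => ?_
          rw [hrepr, Finsupp.add_apply]; exact abs_add_le _ _
      _ = (∑ i ∈ (b.repr x).support ∪ (b.repr y).support, |b.repr x i|)
            + ∑ i ∈ (b.repr x).support ∪ (b.repr y).support, |b.repr y i| :=
          Finset.sum_add_distrib
      _ = (∑ i ∈ (b.repr x).support, |b.repr x i|)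
            + ∑ i ∈ (b.repr y).support, |b.repr y i| := by
          rw [← Finset.sum_subset Finset.subset_union_left
              (fun i _ hi => by simp [Finsupp.notMem_support_iff.mp hi]),
            ← Finset.sum_subset Finset.subset_union_right
              (fun i _ hi => by simp [Finsupp.notMem_support_iff.mp hi])]
  neg' := by
    intro x
    simp [map_neg]
  eq_zero_of_map_eq_zero' := by
    classical
    intro x hx
    set b := Module.Basis.ofVectorSpace ℝ V
    have h0 : b.repr x = 0 := by
      ext i
      by_cases hi : i ∈ (b.repr x).support
      · exact abs_eq_zero.mp
          ((Finset.sum_eq_zero_iff_of_nonneg (fun i _ => abs_nonneg _)).mp hx i hi)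
      · simpa using Finsupp.notMem_support_iff.mp hi
    exact b.repr.map_eq_zero_iff.mp h0

/-- The quadratic form `Q(v) = -‖v‖²` on `ℝ^m`. -/
def Qneg (m : ℕ) : QuadraticForm ℝ (EuclideanSpace ℝ (Fin m)) :=
  (QuadraticMap.weightedSumSquares ℝ fun _ : Fin m => (-1 : ℝ)).comp
    (WithLp.linearEquiv 2 ℝ (Fin m → ℝ)).toLinearMap

/-- The real Clifford algebra `ℝ_{0,m}`. -/
abbrev Cl (m : ℕ) := CliffordAlgebra (Qneg m)

/-- The canonical embedding `ι : ℝ^m → ℝ_{0,m}`. -/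
abbrev ιC (m : ℕ) : EuclideanSpace ℝ (Fin m) →ₗ[ℝ] Cl m := CliffordAlgebra.ι (Qneg m)

/-- The generators `e₁, …, e_m` of `ℝ_{0,m}`. -/
def eC (m : ℕ) (j : Fin m) : Cl m := ιC m (EuclideanSpace.single j 1)

noncomputable instance (m : ℕ) : NormedAddCommGroup (Cl m) :=
  (hamelNorm (Cl m)).toNormedAddCommGroup

noncomputable instance (m : ℕ) : NormedSpace ℝ (Cl m) where
  norm_smul_le a v := by
    classical
    have hv : ‖v‖ = ∑ i ∈ ((Module.Basis.ofVectorSpace ℝ (Cl m)).repr v).support,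
        |(Module.Basis.ofVectorSpace ℝ (Cl m)).repr v i| := rfl
    have hav : ‖a • v‖ = ∑ i ∈ ((Module.Basis.ofVectorSpace ℝ (Cl m)).repr (a • v)).support,
        |(Module.Basis.ofVectorSpace ℝ (Cl m)).repr (a • v) i| := rfl
    set b := Module.Basis.ofVectorSpace ℝ (Cl m)
    have hrepr : b.repr (a • v) = a • b.repr v := map_smul _ _ _
    rw [hav, hv, Real.norm_eq_abs]
    calc ∑ i ∈ (b.repr (a • v)).support, |b.repr (a • v) i|
        ≤ ∑ i ∈ (b.repr v).support, |b.repr (a • v) i| := by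
          refine Finset.sum_le_sum_of_subset_of_nonneg ?_ (fun i _ _ => abs_nonneg _)
          rw [hrepr]; exact Finsupp.support_smul
      _ = ∑ i ∈ (b.repr v).support, |a| * |b.repr v i| := by
          refine Finset.sum_congr rfl fun i _ => ?_
          rw [hrepr, Finsupp.smul_apply, smul_eq_mul, abs_mul]
      _ = |a| * ∑ i ∈ (b.repr v).support, |b.repr v i| := by rw [Finset.mul_sum]

/-- The Dirac operator acting from the left: `∂_x f = Σⱼ eⱼ (∂_{xⱼ} f)`. -/
def diracL (m : ℕ) (f : EuclideanSpace ℝ (Fin m) → Cl m) (x : EuclideanSpace ℝ (Fin m)) : Cl m :=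
  ∑ j, eC m j * fderiv ℝ f x (EuclideanSpace.single j 1)

/-- The Dirac operator acting from the right: `f ∂_x = Σⱼ (∂_{xⱼ} f) eⱼ`. -/
def diracR (m : ℕ) (f : EuclideanSpace ℝ (Fin m) → Cl m) (x : EuclideanSpace ℝ (Fin m)) : Cl m :=
  ∑ j, fderiv ℝ f x (EuclideanSpace.single j 1) * eC m j




lemma Qneg_apply (m : ℕ) (v : EuclideanSpace ℝ (Fin m)) : Qneg m v = -‖v‖^2 := by
  simp only [Qneg, QuadraticMap.comp_apply, QuadraticMap.weightedSumSquares_apply,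
    EuclideanSpace.norm_eq, Real.sq_sqrt (Finset.sum_nonneg fun i _ => sq_nonneg _)]
  rw [← Finset.sum_neg_distrib]
  refine Finset.sum_congr rfl fun i _ => ?_
  simp [WithLp.linearEquiv, sq]

lemma polar_Qneg (m : ℕ) (u v : EuclideanSpace ℝ (Fin m)) :
    QuadraticMap.polar (Qneg m) u v = -2 * inner ℝ u v := by
  simp only [QuadraticMap.polar, Qneg_apply]
  rw [norm_add_sq_real]
  ring

lemma eC_mul_self (m : ℕ) (j : Fin m) : eC m j * eC m j = -1 := by
  rw [eC, CliffordAlgebra.ι_sq_scalar, Qneg_apply]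
  simp

lemma eC_anticomm (m : ℕ) {i j : Fin m} (h : j ≠ i) :
    eC m j * eC m i = -(eC m i * eC m j) := by
  rw [eC, eC, CliffordAlgebra.ι_mul_ι_comm, polar_Qneg]
  have : (inner ℝ (EuclideanSpace.single j (1:ℝ)) (EuclideanSpace.single i (1:ℝ)) : ℝ) = 0 := by
    simp [EuclideanSpace.inner_single_left, EuclideanSpace.single_apply, h, Ne.symm h]
  rw [this]
  simp

/-- products of generators over a list -/
def prodL (m : ℕ) (l : List (Fin m)) : Cl m := (l.map (eC m)).prod

lemma prodL_nil (m : ℕ) : prodL m [] = 1 := rfl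
lemma prodL_cons (m : ℕ) (i : Fin m) (l : List (Fin m)) :
    prodL m (i :: l) = eC m i * prodL m l := by simp [prodL]

lemma straighten (m : ℕ) : ∀ (l : List (Fin m)), l.Pairwise (· < ·) → ∀ (j : Fin m),
    ∃ (c : ℝ) (l' : List (Fin m)), l'.Pairwise (· < ·) ∧ (∀ b ∈ l', b = j ∨ b ∈ l) ∧
      eC m j * prodL m l = c • prodL m l' := by
  intro l
  induction l with
  | nil =>
    intro _ j
    exact ⟨1, [j], by simp, by simp, by simp [prodL_cons, prodL_nil]⟩
  | cons i t ih =>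
    intro hp j
    obtain ⟨hit, hpt⟩ := List.pairwise_cons.mp hp
    rcases lt_trichotomy j i with hji | hji | hji
    · refine ⟨1, j :: i :: t, ?_, ?_, by simp [prodL_cons]⟩
      · exact List.pairwise_cons.mpr ⟨by
          intro b hb
          rcases List.mem_cons.mp hb with rfl | hb
          · exact hji
          · exact hji.trans (hit b hb), hp⟩
      · intro b hb; rcases List.mem_cons.mp hb with rfl | hb
        · exact Or.inl rfl
        · exact Or.inr hb
    · subst hji
      refine ⟨-1, t, hpt, fun b hb => Or.inr (List.mem_cons_of_mem _ hb), ?_⟩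
      rw [prodL_cons, ← mul_assoc, eC_mul_self]
      simp
    · obtain ⟨c, l'', hp'', hmem'', heq''⟩ := ih hpt j
      refine ⟨-c, i :: l'', ?_, ?_, ?_⟩
      · refine List.pairwise_cons.mpr ⟨?_, hp''⟩
        intro b hb
        rcases hmem'' b hb with rfl | hb
        · exact hji
        · exact hit b hb
      · intro b hb
        rcases List.mem_cons.mp hb with rfl | hb
        · exact Or.inr List.mem_cons_self
        · rcases hmem'' b hb with rfl | hb
          · exact Or.inl rfl
          · exact Or.inr (List.mem_cons_of_mem _ hb)
      · rw [prodL_cons, ← mul_assoc, eC_anticomm m (ne_of_gt hji), neg_mul, mul_assoc,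
          heq'', prodL_cons]
        rw [mul_smul_comm]
        simp

/-- the candidate finite spanning submodule -/
def SpanS (m : ℕ) : Submodule ℝ (Cl m) :=
  Submodule.span ℝ (prodL m '' {l | l.Pairwise (· < ·)})

lemma one_mem_SpanS (m : ℕ) : (1 : Cl m) ∈ SpanS m :=
  Submodule.subset_span ⟨[], by simp, rfl⟩

lemma eC_mul_mem_SpanS (m : ℕ) (j : Fin m) {z : Cl m} (hz : z ∈ SpanS m) :
    eC m j * z ∈ SpanS m := by
  induction hz using Submodule.span_induction with
  | mem w hw =>
    obtain ⟨l, hl, rfl⟩ := hw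
    obtain ⟨c, l', hp', _, heq⟩ := straighten m l hl j
    rw [heq]
    exact Submodule.smul_mem _ _ (Submodule.subset_span ⟨l', hp', rfl⟩)
  | zero => simp [Submodule.zero_mem]
  | add a b _ _ ha hb => rw [mul_add]; exact Submodule.add_mem _ ha hb
  | smul c a _ ha => rw [mul_smul_comm]; exact Submodule.smul_mem _ _ ha

lemma euclid_decomp (m : ℕ) (v : EuclideanSpace ℝ (Fin m)) :
    ∑ j, v j • EuclideanSpace.single j (1:ℝ) = v := by
  have := (EuclideanSpace.basisFun (Fin m) ℝ).sum_repr v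
  simpa [EuclideanSpace.basisFun_repr, EuclideanSpace.basisFun_apply] using this

lemma iota_eq_sum (m : ℕ) (v : EuclideanSpace ℝ (Fin m)) :
    ιC m v = ∑ j, v j • eC m j := by
  conv_lhs => rw [← euclid_decomp m v]
  rw [map_sum]
  simp [eC]

lemma iota_mul_mem_SpanS (m : ℕ) (v : EuclideanSpace ℝ (Fin m)) {z : Cl m}
    (hz : z ∈ SpanS m) : ιC m v * z ∈ SpanS m := by
  rw [iota_eq_sum, Finset.sum_mul]
  refine Submodule.sum_mem _ fun j _ => ?_
  rw [smul_mul_assoc]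
  exact Submodule.smul_mem _ _ (eC_mul_mem_SpanS m j hz)

lemma prodL_mul_mem_SpanS (m : ℕ) (l : List (Fin m)) {z : Cl m} (hz : z ∈ SpanS m) :
    prodL m l * z ∈ SpanS m := by
  induction l with
  | nil => simpa [prodL_nil] using hz
  | cons i t ih =>
    rw [prodL_cons, mul_assoc]
    exact eC_mul_mem_SpanS m i ih

lemma mul_mem_SpanS (m : ℕ) {x z : Cl m} (hx : x ∈ SpanS m) (hz : z ∈ SpanS m) :
    x * z ∈ SpanS m := by
  induction hx using Submodule.span_induction with
  | mem w hw => obtain ⟨l, _, rfl⟩ := hw; exact prodL_mul_mem_SpanS m l hz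
  | zero => simp [Submodule.zero_mem]
  | add a b _ _ ha hb => rw [add_mul]; exact Submodule.add_mem _ ha hb
  | smul c a _ ha => rw [smul_mul_assoc]; exact Submodule.smul_mem _ _ ha

lemma SpanS_eq_top (m : ℕ) : SpanS m = ⊤ := by
  rw [Submodule.eq_top_iff']
  intro x
  induction x using CliffordAlgebra.induction with
  | algebraMap r =>
    rw [Algebra.algebraMap_eq_smul_one]
    exact Submodule.smul_mem _ _ (one_mem_SpanS m)
  | ι v => simpa using iota_mul_mem_SpanS m v (one_mem_SpanS m)
  | mul a b ha hb => exact mul_mem_SpanS m ha hb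
  | add a b ha hb => exact Submodule.add_mem _ ha hb

instance Cl.instFiniteDimensional (m : ℕ) : FiniteDimensional ℝ (Cl m) := by
  have hfin : ({l : List (Fin m) | l.Pairwise (· < ·)}).Finite := by
    refine (List.finite_length_le (Fin m) m).subset ?_
    intro l hl
    simpa using (List.Nodup.length_le_card (hl.imp ne_of_lt))
  have hfin2 : (prodL m '' {l | l.Pairwise (· < ·)}).Finite := hfin.image _
  exact ⟨Submodule.fg_def.mpr ⟨_, hfin2, SpanS_eq_top m⟩⟩

/-- multiplication as a continuous bilinear map -/
def mulCLM (m : ℕ) : Cl m →L[ℝ] Cl m →L[ℝ] Cl m :=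
  LinearMap.toContinuousLinearMap
    { toFun := fun a => LinearMap.toContinuousLinearMap (LinearMap.mulLeft ℝ a)
      map_add' := by intros a b; ext z; simp [add_mul]
      map_smul' := by intros c a; ext z; simp [smul_mul_assoc] }

@[simp] lemma mulCLM_apply (m : ℕ) (a b : Cl m) : mulCLM m a b = a * b := rfl

/-- `ι` as a continuous linear map -/
def ιCLM (m : ℕ) : EuclideanSpace ℝ (Fin m) →L[ℝ] Cl m :=
  LinearMap.toContinuousLinearMap (ιC m)

@[simp] lemma ιCLM_apply (m : ℕ) (v : EuclideanSpace ℝ (Fin m)) : ιCLM m v = ιC m v := rfl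

lemma euler (m k : ℕ) (P : EuclideanSpace ℝ (Fin m) → Cl m) (hP : ContDiff ℝ 1 P)
    (hPhom : ∀ (t : ℝ) (x : EuclideanSpace ℝ (Fin m)), P (t • x) = t ^ k • P x)
    (x : EuclideanSpace ℝ (Fin m)) : fderiv ℝ P x x = (k : ℝ) • P x := by
  have hd : HasFDerivAt P (fderiv ℝ P x) x :=
    (hP.differentiable one_ne_zero x).hasFDerivAt
  have hsm : HasDerivAt (fun t : ℝ => t • x) x 1 := by
    simpa using (hasDerivAt_id (1 : ℝ)).smul_const x
  have h1 : HasDerivAt (fun t : ℝ => P (t • x)) (fderiv ℝ P x x) 1 := by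
    have hd' : HasFDerivAt P (fderiv ℝ P x) ((1 : ℝ) • x) := by rwa [one_smul]
    exact hd'.comp_hasDerivAt 1 hsm
  have h2 : HasDerivAt (fun t : ℝ => t ^ k • P x) ((k : ℝ) • P x) 1 := by
    simpa using (hasDerivAt_pow k (1 : ℝ)).smul_const (P x)
  have hfun : (fun t : ℝ => P (t • x)) = fun t : ℝ => t ^ k • P x :=
    funext fun t => hPhom t x
  rw [hfun] at h1
  exact h1.unique h2

lemma iota_sq (m : ℕ) (v : EuclideanSpace ℝ (Fin m)) :
    ιC m v * ιC m v = (-‖v‖ ^ 2 : ℝ) • 1 := by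
  rw [CliffordAlgebra.ι_sq_scalar, Qneg_apply, Algebra.algebraMap_eq_smul_one]

lemma eC_mul_iota_mul (m : ℕ) (j : Fin m) (v : EuclideanSpace ℝ (Fin m)) (z : Cl m) :
    eC m j * (ιC m v * z) = -(ιC m v * (eC m j * z)) + (-2 * v j) • z := by
  have h := CliffordAlgebra.ι_mul_ι_comm (Q := Qneg m) (EuclideanSpace.single j (1 : ℝ)) v
  have hpol : QuadraticMap.polar (Qneg m) (EuclideanSpace.single j (1 : ℝ)) v = -2 * v j := by
    rw [polar_Qneg]
    simp [EuclideanSpace.inner_single_left]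
  rw [← mul_assoc]
  rw [show eC m j * ιC m v = CliffordAlgebra.ι (Qneg m) (EuclideanSpace.single j (1:ℝ)) *
      CliffordAlgebra.ι (Qneg m) v from rfl, h, hpol]
  rw [sub_mul, Algebra.algebraMap_eq_smul_one, smul_mul_assoc, one_mul, mul_assoc]
  abel

/-- `∂_x(B(r) ι(x) P(x)) = -((2k + m)B(r) + r B′(r)) P(x)` for a left
monogenic `P` homogeneous of degree `k`. -/
theorem dirac_B_smul_xP (m k : ℕ) (hm : 1 ≤ m) (P : EuclideanSpace ℝ (Fin m) → Cl m)
    (hP : ContDiff ℝ 1 P) (hPmono : ∀ x, diracL m P x = 0)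
    (hPhom : ∀ (t : ℝ) (x : EuclideanSpace ℝ (Fin m)), P (t • x) = t ^ k • P x)
    (B : ℝ → ℝ) (hB : ContDiffOn ℝ 1 B (Set.Ioi 0))
    (x : EuclideanSpace ℝ (Fin m)) (hx : x ≠ 0) :
    diracL m (fun y => B ‖y‖ • (ιC m y * P y)) x
      = (-((2 * (k : ℝ) + (m : ℝ)) * B ‖x‖ + ‖x‖ * deriv B ‖x‖)) • P x := by
  have hr : (0 : ℝ) < ‖x‖ := norm_pos_iff.mpr hx
  have hPd : HasFDerivAt P (fderiv ℝ P x) x := (hP.differentiable one_ne_zero x).hasFDerivAt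
  set P' := fderiv ℝ P x with hP'def
  -- derivative of the norm
  have hn2 : HasFDerivAt (fun y : EuclideanSpace ℝ (Fin m) => ‖y‖ ^ 2)
      (2 • (innerSL ℝ x).comp (ContinuousLinearMap.id ℝ (EuclideanSpace ℝ (Fin m)))) x :=
    (hasFDerivAt_id x).norm_sq
  have hsq := hn2.sqrt (by positivity : ‖x‖ ^ 2 ≠ 0)
  have hnorm : HasFDerivAt (fun y : EuclideanSpace ℝ (Fin m) => ‖y‖)
      ((1 / ‖x‖) • innerSL ℝ x) x := by
    have heq : (fun y : EuclideanSpace ℝ (Fin m) => Real.sqrt (‖y‖ ^ 2))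
        = fun y : EuclideanSpace ℝ (Fin m) => ‖y‖ :=
      funext fun y => Real.sqrt_sq (norm_nonneg y)
    rw [heq] at hsq
    refine hsq.congr_fderiv ?_
    rw [Real.sqrt_sq (norm_nonneg x)]
    ext v
    simp only [ContinuousLinearMap.smul_apply, innerSL_apply_apply, smul_eq_mul,
      ContinuousLinearMap.comp_apply, ContinuousLinearMap.coe_id', id_eq,
      ContinuousLinearMap.smul_apply]
    rw [nsmul_eq_mul]
    push_cast
    ring
  have hBd : HasDerivAt B (deriv B ‖x‖) ‖x‖ :=
    ((hB.contDiffAt (isOpen_Ioi.mem_nhds hr)).differentiableAt one_ne_zero).hasDerivAt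
  have hBr : HasFDerivAt (fun y : EuclideanSpace ℝ (Fin m) => B ‖y‖)
      (deriv B ‖x‖ • ((1 / ‖x‖) • innerSL ℝ x)) x := hBd.comp_hasFDerivAt x hnorm
  have hc : HasFDerivAt (fun y : EuclideanSpace ℝ (Fin m) => mulCLM m (ιCLM m y))
      ((mulCLM m).comp (ιCLM m)) x := ((mulCLM m).comp (ιCLM m)).hasFDerivAt
  have hG : HasFDerivAt (fun y : EuclideanSpace ℝ (Fin m) => ιC m y * P y)
      ((mulCLM m (ιCLM m x)).comp P' + ((mulCLM m).comp (ιCLM m)).flip (P x)) x :=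
    hc.clm_apply hPd
  have hF : HasFDerivAt (fun y : EuclideanSpace ℝ (Fin m) => B ‖y‖ • (ιC m y * P y))
      (B ‖x‖ • ((mulCLM m (ιCLM m x)).comp P' + ((mulCLM m).comp (ιCLM m)).flip (P x))
        + (deriv B ‖x‖ • ((1 / ‖x‖) • innerSL ℝ x)).smulRight (ιC m x * P x)) x :=
    hBr.smul hG
  have hfd := hF.fderiv
  rw [diracL, hfd]
  -- evaluate the derivative at the basis vectors
  have hLj : ∀ j : Fin m,
      (B ‖x‖ • ((mulCLM m (ιCLM m x)).comp P' + ((mulCLM m).comp (ιCLM m)).flip (P x))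
        + (deriv B ‖x‖ • ((1 / ‖x‖) • innerSL ℝ x)).smulRight (ιC m x * P x))
        (EuclideanSpace.single j 1)
      = B ‖x‖ • (ιC m x * P' (EuclideanSpace.single j 1)) + B ‖x‖ • (eC m j * P x)
        + (deriv B ‖x‖ * ((1 / ‖x‖) * x j)) • (ιC m x * P x) := by
    intro j
    have hinner : (inner ℝ x (EuclideanSpace.single j (1:ℝ)) : ℝ) = x j := by
      simp [EuclideanSpace.inner_single_right]
    simp only [ContinuousLinearMap.add_apply, ContinuousLinearMap.smul_apply,
      ContinuousLinearMap.comp_apply, ContinuousLinearMap.flip_apply,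
      ContinuousLinearMap.smulRight_apply, mulCLM_apply, ιCLM_apply, innerSL_apply_apply,
      smul_eq_mul, hinner, smul_add]
    rw [eC]
  simp only [hLj]
  simp only [mul_add, mul_smul_comm]
  rw [Finset.sum_add_distrib, Finset.sum_add_distrib]
  -- the three sums
  have hS1 : ∑ j : Fin m, eC m j * (ιC m x * P' (EuclideanSpace.single j 1))
      = (-2 * (k : ℝ)) • P x := by
    have h1 : ∀ j : Fin m, eC m j * (ιC m x * P' (EuclideanSpace.single j 1))
        = -(ιC m x * (eC m j * P' (EuclideanSpace.single j 1)))
          + ((-2 : ℝ) * x j) • P' (EuclideanSpace.single j 1) :=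
      fun j => eC_mul_iota_mul m j x (P' (EuclideanSpace.single j 1))
    rw [Finset.sum_congr rfl fun j _ => h1 j, Finset.sum_add_distrib]
    have h2 : ∑ j : Fin m, -(ιC m x * (eC m j * P' (EuclideanSpace.single j 1))) = 0 := by
      rw [Finset.sum_neg_distrib, ← Finset.mul_sum]
      have : ∑ j : Fin m, eC m j * P' (EuclideanSpace.single j 1) = diracL m P x := rfl
      rw [this, hPmono x, mul_zero, neg_zero]
    have h3 : ∑ j : Fin m, ((-2 : ℝ) * x j) • P' (EuclideanSpace.single j 1)
        = (-2 : ℝ) • P' x := by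
      have : ∀ j : Fin m, ((-2 : ℝ) * x j) • P' (EuclideanSpace.single j 1)
          = (-2 : ℝ) • (x j • P' (EuclideanSpace.single j 1)) := fun j => by
        rw [smul_smul]
      rw [Finset.sum_congr rfl fun j _ => this j, ← Finset.smul_sum]
      congr 1
      calc ∑ j : Fin m, x j • P' (EuclideanSpace.single j 1)
          = P' (∑ j : Fin m, x j • EuclideanSpace.single j 1) := by
            rw [map_sum]; exact Finset.sum_congr rfl fun j _ => (P'.map_smul _ _).symm
        _ = P' x := by rw [euclid_decomp]
    rw [h2, h3, zero_add, hP'def, euler m k P hP hPhom x, smul_smul]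
  have hS2 : ∑ j : Fin m, eC m j * (eC m j * P x) = (-(m : ℝ)) • P x := by
    have h1 : ∀ j : Fin m, eC m j * (eC m j * P x) = -(P x) := fun j => by
      rw [← mul_assoc, eC_mul_self]; simp
    rw [Finset.sum_congr rfl fun j _ => h1 j, Finset.sum_const, Finset.card_univ,
      Fintype.card_fin, ← Nat.cast_smul_eq_nsmul ℝ]
    rw [smul_neg, ← neg_smul]
  have hS3 : ∑ j : Fin m, (deriv B ‖x‖ * ((1 / ‖x‖) * x j)) • (eC m j * (ιC m x * P x))
      = ((deriv B ‖x‖ * (1 / ‖x‖)) * (-‖x‖ ^ 2)) • P x := by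
    have h1 : ∀ j : Fin m, (deriv B ‖x‖ * ((1 / ‖x‖) * x j)) • (eC m j * (ιC m x * P x))
        = (deriv B ‖x‖ * (1 / ‖x‖)) • (x j • (eC m j * (ιC m x * P x))) := fun j => by
      rw [smul_smul]; ring_nf
    rw [Finset.sum_congr rfl fun j _ => h1 j, ← Finset.smul_sum]
    have h2 : ∀ w : Cl m, ∑ j : Fin m, x j • (eC m j * w) = ιC m x * w := by
      intro w
      rw [iota_eq_sum, Finset.sum_mul]
      exact Finset.sum_congr rfl fun j _ => (smul_mul_assoc _ _ _).symm
    rw [h2, ← mul_assoc, iota_sq, smul_mul_assoc, one_mul, smul_smul]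
  rw [← Finset.smul_sum, ← Finset.smul_sum, hS1, hS2, hS3]
  rw [smul_smul, smul_smul, ← add_smul, ← add_smul]
  congr 1
  field_simp
  ring

end
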